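/- Let q be a prime number, let l, k be positive natural numbers, and set m = l + v_q(l!). Then P(q^m·k + q·l − 1, q·l − 1) ≠ P(h, r) for all natural numbers h and r with r ≥ q·l. -/

import Mathlib

/-- valuation of `q^m * k + j` equals valuation of `j` when `0 < j < q^m`. -/
lemma padicValNat_pow_mul_add {q m k j : ℕ} (hq : Nat.Prime q) (hj : 0 < j)
    (hjm : j < q ^ m) : padicValNat q (q ^ m * k + j) = padicValNat q j := by
  haveI : Fact q.Prime := ⟨hq⟩
  set e := padicValNat q j with he
  have hdvdj : q ^ e ∣ j := pow_padicValNat_dvd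
  have hem : e < m := by
    have h1 : q ^ e ≤ j := Nat.le_of_dvd hj hdvdj
    exact (Nat.pow_lt_pow_iff_right hq.one_lt).mp (lt_of_le_of_lt h1 hjm)
  have hpos : q ^ m * k + j ≠ 0 := by positivity
  apply le_antisymm
  · -- v(sum) ≤ e, i.e. ¬ q^(e+1) ∣ sum
    by_contra hcon
    push_neg at hcon
    have h1 : q ^ (e + 1) ∣ q ^ m * k + j :=
      (padicValNat_dvd_iff_le hpos).mpr hcon
    have h2 : q ^ (e + 1) ∣ q ^ m * k := Dvd.dvd.mul_right (pow_dvd_pow q hem) k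
    have h3 : q ^ (e + 1) ∣ j := by
      have := Nat.dvd_sub h1 h2
      simpa using this
    exact absurd ((padicValNat_dvd_iff_le hj.ne').mp h3) (by omega)
  · -- e ≤ v(sum)
    have h2 : q ^ e ∣ q ^ m * k := Dvd.dvd.mul_right (pow_dvd_pow q hem.le) k
    exact (padicValNat_dvd_iff_le hpos).mp (Nat.dvd_add h2 hdvdj)

lemma padicValNat_descFactorial_aux {q m k : ℕ} (hq : Nat.Prime q) (hk : 0 < k) :
    ∀ t : ℕ, t < q ^ m →
      padicValNat q ((q ^ m * k + t).descFactorial t) = padicValNat q (Nat.factorial t) := by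
  haveI : Fact q.Prime := ⟨hq⟩
  intro t
  induction t with
  | zero => simp
  | succ t ih =>
    intro ht
    have ht' : t < q ^ m := Nat.lt_of_succ_lt ht
    have h1 : (q ^ m * k + (t + 1)).descFactorial (t + 1) =
        (q ^ m * k + t + 1) * (q ^ m * k + t).descFactorial t := by
      have : q ^ m * k + (t + 1) = (q ^ m * k + t) + 1 := by ring
      rw [this, Nat.succ_descFactorial_succ]
    have hdpos : 0 < (q ^ m * k + t).descFactorial t := by
      rw [Nat.pos_iff_ne_zero, Ne, Nat.descFactorial_eq_zero_iff_lt]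
      omega
    rw [h1, padicValNat.mul (by positivity) hdpos.ne', ih ht',
      Nat.factorial_succ, padicValNat.mul (Nat.succ_ne_zero t) (Nat.factorial_ne_zero t)]
    congr 1
    have : q ^ m * k + t + 1 = q ^ m * k + (t + 1) := by ring
    rw [this]
    exact padicValNat_pow_mul_add hq (Nat.succ_pos t) ht

/-- For a prime `q`, positive naturals `l, k`, and `m = l + v_q(l!)`,
one has `P(q^m·k + q·l − 1, q·l − 1) ≠ P(h, r)` whenever `r ≥ q·l`. -/
theorem descFactorial_padic_ne (q l k : ℕ) (hq : Nat.Prime q) (hl : 0 < l)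
    (hk : 0 < k) (m : ℕ) (hm : m = l + padicValNat q (Nat.factorial l)) :
    ∀ h r : ℕ, q * l ≤ r →
      Nat.descFactorial (q ^ m * k + q * l - 1) (q * l - 1) ≠
        Nat.descFactorial h r := by
  haveI : Fact q.Prime := ⟨hq⟩
  intro h r hr heq
  have hq1 : 1 < q := hq.one_lt
  have hql : 0 < q * l := Nat.mul_pos hq.pos hl
  -- q * l ≤ q ^ m
  have hlm : l ≤ m := by omega
  have hql_le : q * l ≤ q ^ m := by
    have h1 : l - 1 < q ^ (l - 1) := Nat.lt_pow_self hq1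
    have h2 : l ≤ q ^ (l - 1) := by omega
    calc q * l ≤ q * q ^ (l - 1) := Nat.mul_le_mul_left q h2
      _ = q ^ (1 + (l - 1)) := by rw [pow_add, pow_one]
      _ = q ^ l := by congr 1; omega
      _ ≤ q ^ m := Nat.pow_le_pow_right hq.pos hlm
  set b := q * l - 1 with hb
  have hNb : q ^ m * k + q * l - 1 = q ^ m * k + b := by omega
  have hbqm : b < q ^ m := by omega
  -- our descFactorial value and its valuation
  have hval : padicValNat q ((q ^ m * k + b).descFactorial b) =
      padicValNat q (Nat.factorial b) := padicValNat_descFactorial_aux hq hk b hbqm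
  have hApos : 0 < (q ^ m * k + b).descFactorial b := by
    rw [Nat.pos_iff_ne_zero, Ne, Nat.descFactorial_eq_zero_iff_lt]
    omega
  -- valuation of (q*l)! is m
  have hvql : padicValNat q (Nat.factorial (q * l)) = m := by
    rw [padicValNat_factorial_mul l, hm]; omega
  -- v(b!) < m
  have hvb : padicValNat q (Nat.factorial b) < m := by
    have hfac : Nat.factorial (q * l) = (q * l) * Nat.factorial b := by
      have : q * l = b + 1 := by omega
      rw [this, Nat.factorial_succ]
    have hvmul : padicValNat q (Nat.factorial (q * l)) =
        padicValNat q (q * l) + padicValNat q (Nat.factorial b) := by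
      rw [hfac, padicValNat.mul hql.ne' (Nat.factorial_ne_zero b)]
    have hv1 : 1 ≤ padicValNat q (q * l) :=
      one_le_padicValNat_of_dvd hql.ne' (Dvd.intro l rfl)
    omega
  -- v(descFactorial h r) ≥ m
  have hdvd1 : Nat.factorial (q * l) ∣ Nat.factorial r := Nat.factorial_dvd_factorial hr
  have hdvd2 : Nat.factorial r ∣ h.descFactorial r := Nat.factorial_dvd_descFactorial h r
  have hpow : q ^ m ∣ Nat.factorial (q * l) := by
    conv_lhs => rw [← hvql]
    exact pow_padicValNat_dvd
  have hvh : m ≤ padicValNat q (h.descFactorial r) := by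
    have hne : h.descFactorial r ≠ 0 := by
      rw [← heq, hNb]; exact hApos.ne'
    exact (padicValNat_dvd_iff_le hne).mp (hpow.trans (hdvd1.trans hdvd2))
  rw [hNb] at heq
  rw [heq] at hval
  omega
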